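/- Let Φ⋆ ∈ S be a minimizer of J over S, set G⋆(x) := ∇_MΦ⋆(x) and R(x) := F(x) − G⋆(x). Then the Pythagorean identity holds: ∫ ‖F(x)‖_M² dμ(x) = ∫ ‖G⋆(x)‖_M² dμ(x) + ∫ ‖R(x)‖_M² dμ(x). -/

import Mathlib

open RealInnerProductSpace MeasureTheory

private lemma aux_inner_integrable {d : ℕ}
    (A : EuclideanSpace ℝ (Fin d) →ₗ[ℝ] EuclideanSpace ℝ (Fin d))
    {μ : Measure (EuclideanSpace ℝ (Fin d))}
    {u v : EuclideanSpace ℝ (Fin d) → EuclideanSpace ℝ (Fin d)}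
    (hu : Measurable u) (hv : Measurable v)
    (hu2 : Integrable (fun x => ‖u x‖ ^ 2) μ) (hv2 : Integrable (fun x => ‖v x‖ ^ 2) μ) :
    Integrable (fun x => ⟪u x, A (v x)⟫) μ := by
  set C := ‖LinearMap.toContinuousLinearMap A‖ with hC
  have hcont : Continuous A := A.continuous_of_finiteDimensional
  have hmeas : AEStronglyMeasurable (fun x => ⟪u x, A (v x)⟫) μ :=
    (hu.inner (hcont.measurable.comp hv)).aestronglyMeasurable
  have hbound : Integrable (fun x => C / 2 * (‖u x‖ ^ 2 + ‖v x‖ ^ 2)) μ :=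
    (hu2.add hv2).const_mul _
  refine hbound.mono' hmeas ?_
  filter_upwards with x
  have h1 : ‖⟪u x, A (v x)⟫‖ ≤ ‖u x‖ * ‖A (v x)‖ := norm_inner_le_norm _ _
  have h2 : ‖A (v x)‖ ≤ C * ‖v x‖ := by
    have h2' := (LinearMap.toContinuousLinearMap A).le_opNorm (v x)
    rwa [LinearMap.coe_toContinuousLinearMap'] at h2'
  have h3 : ‖u x‖ * ‖A (v x)‖ ≤ ‖u x‖ * (C * ‖v x‖) :=
    mul_le_mul_of_nonneg_left h2 (norm_nonneg _)
  have hC0 : (0:ℝ) ≤ C := norm_nonneg _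
  nlinarith [norm_nonneg (u x), norm_nonneg (v x), sq_nonneg (‖u x‖ - ‖v x‖)]

/-- Pythagorean identity for the HPML projection: with `G⋆ = ∇_M Φ⋆` for a minimizer `Φ⋆`
of `J` over `S` and residual `R = F − G⋆`, one has
`∫ ‖F‖_M² dμ = ∫ ‖G⋆‖_M² dμ + ∫ ‖R‖_M² dμ`. -/
theorem stmt_4 {d : ℕ}
    (M : Matrix (Fin d) (Fin d) ℝ) (hM : M.PosDef)
    (μ : Measure (EuclideanSpace ℝ (Fin d))) [IsProbabilityMeasure μ]
    (F : EuclideanSpace ℝ (Fin d) → EuclideanSpace ℝ (Fin d))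
    (hFmeas : Measurable F) (hFint : Integrable (fun x => ‖F x‖ ^ 2) μ)
    (S : Set (EuclideanSpace ℝ (Fin d) → ℝ))
    (hS : S = {Φ | Differentiable ℝ Φ ∧ Measurable (fun x => gradient Φ x) ∧
      Integrable (fun x => ‖gradient Φ x‖ ^ 2) μ})
    (J : (EuclideanSpace ℝ (Fin d) → ℝ) → ℝ)
    (hJ : J = fun Φ =>
      ∫ x, ⟪F x - Matrix.toEuclideanLin M⁻¹ (gradient Φ x),
        Matrix.toEuclideanLin M (F x - Matrix.toEuclideanLin M⁻¹ (gradient Φ x))⟫ ∂μ)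
    (Φstar : EuclideanSpace ℝ (Fin d) → ℝ) (hΦstar : Φstar ∈ S)
    (hmin : ∀ Φ ∈ S, J Φstar ≤ J Φ)
    (Gstar R : EuclideanSpace ℝ (Fin d) → EuclideanSpace ℝ (Fin d))
    (hG : ∀ x, Gstar x = Matrix.toEuclideanLin M⁻¹ (gradient Φstar x))
    (hR : ∀ x, R x = F x - Gstar x) :
    ∫ x, ⟪F x, Matrix.toEuclideanLin M (F x)⟫ ∂μ =
      (∫ x, ⟪Gstar x, Matrix.toEuclideanLin M (Gstar x)⟫ ∂μ) +
      ∫ x, ⟪R x, Matrix.toEuclideanLin M (R x)⟫ ∂μ := by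
  subst hS hJ
  obtain ⟨hdiff, hgmeas, hgint⟩ := hΦstar
  have hMsym : (Matrix.toEuclideanLin M).IsSymmetric :=
    Matrix.isHermitian_iff_isSymmetric.1 hM.1
  -- measurability and integrability of Gstar and R
  have hGeq : Gstar = fun x => Matrix.toEuclideanLin M⁻¹ (gradient Φstar x) := funext hG
  have hcontB : Continuous (Matrix.toEuclideanLin M⁻¹ :
      EuclideanSpace ℝ (Fin d) →ₗ[ℝ] EuclideanSpace ℝ (Fin d)) :=
    LinearMap.continuous_of_finiteDimensional _
  have hGmeas : Measurable Gstar := hGeq ▸ hcontB.measurable.comp hgmeas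
  have hGint : Integrable (fun x => ‖Gstar x‖ ^ 2) μ := by
    set C := ‖LinearMap.toContinuousLinearMap
      (Matrix.toEuclideanLin M⁻¹ :
        EuclideanSpace ℝ (Fin d) →ₗ[ℝ] EuclideanSpace ℝ (Fin d))‖ with hCdef
    refine (hgint.const_mul (C ^ 2)).mono'
      ((hGmeas.norm.pow_const 2).aestronglyMeasurable) ?_
    filter_upwards with x
    have h2 : ‖Gstar x‖ ≤ C * ‖gradient Φstar x‖ := by
      rw [hG x]
      have h2' := (LinearMap.toContinuousLinearMap
        (Matrix.toEuclideanLin M⁻¹ :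
          EuclideanSpace ℝ (Fin d) →ₗ[ℝ] EuclideanSpace ℝ (Fin d))).le_opNorm
        (gradient Φstar x)
      rwa [LinearMap.coe_toContinuousLinearMap'] at h2'
    rw [Real.norm_eq_abs, abs_of_nonneg (by positivity)]
    calc ‖Gstar x‖ ^ 2 ≤ (C * ‖gradient Φstar x‖) ^ 2 :=
          pow_le_pow_left₀ (norm_nonneg _) h2 2
      _ = C ^ 2 * ‖gradient Φstar x‖ ^ 2 := by ring
  have hReq : R = fun x => F x - Gstar x := funext hR
  have hRmeas : Measurable R := hReq ▸ hFmeas.sub hGmeas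
  have hRint : Integrable (fun x => ‖R x‖ ^ 2) μ := by
    refine ((hFint.add hGint).const_mul 2).mono'
      ((hRmeas.norm.pow_const 2).aestronglyMeasurable) ?_
    filter_upwards with x
    simp only [Pi.add_apply]
    rw [Real.norm_eq_abs, abs_of_nonneg (by positivity), hR x]
    have h := norm_sub_le (F x) (Gstar x)
    nlinarith [norm_nonneg (F x), norm_nonneg (Gstar x),
      norm_nonneg (F x - Gstar x), sq_nonneg (‖F x‖ - ‖Gstar x‖)]
  -- cross integrabilities
  have iRR := aux_inner_integrable (Matrix.toEuclideanLin M) hRmeas hRmeas hRint hRint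
  have iGR := aux_inner_integrable (Matrix.toEuclideanLin M) hGmeas hRmeas hGint hRint
  have iGG := aux_inner_integrable (Matrix.toEuclideanLin M) hGmeas hGmeas hGint hGint
  set a := ∫ x, ⟪Gstar x, Matrix.toEuclideanLin M (Gstar x)⟫ ∂μ with ha
  set c := ∫ x, ⟪Gstar x, Matrix.toEuclideanLin M (R x)⟫ ∂μ with hcdef
  have hRG : ∀ x, F x - Matrix.toEuclideanLin M⁻¹ (gradient Φstar x) = R x := by
    intro x; rw [hR x, hG x]
  -- the variational inequality
  have key : ∀ t : ℝ, 0 ≤ t ^ 2 * a - 2 * t * c := by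
    intro t
    set Φt : EuclideanSpace ℝ (Fin d) → ℝ := fun x => (1 + t) * Φstar x with hΦt
    have hdt : Differentiable ℝ Φt := hdiff.const_mul _
    have hgradt : ∀ x, gradient Φt x = (1 + t) • gradient Φstar x := by
      intro x
      have h1 : HasGradientAt Φstar (gradient Φstar x) x := (hdiff x).hasGradientAt
      have h2 : HasFDerivAt Φt
          ((1 + t) • (InnerProductSpace.toDual ℝ (EuclideanSpace ℝ (Fin d))
            (gradient Φstar x))) x := h1.hasFDerivAt.const_mul _
      have h3 : ((1 + t) • (InnerProductSpace.toDual ℝ (EuclideanSpace ℝ (Fin d))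
            (gradient Φstar x)))
          = InnerProductSpace.toDual ℝ (EuclideanSpace ℝ (Fin d))
            ((1 + t) • gradient Φstar x) := by
        ext y
        simp [InnerProductSpace.toDual_apply_apply, real_inner_smul_left]
      rw [h3] at h2
      exact HasGradientAt.gradient (hasGradientAt_iff_hasFDerivAt.mpr h2)
    have hmem : Φt ∈ {Φ : EuclideanSpace ℝ (Fin d) → ℝ |
        Differentiable ℝ Φ ∧ Measurable (fun x => gradient Φ x) ∧
        Integrable (fun x => ‖gradient Φ x‖ ^ 2) μ} := by
      refine ⟨hdt, ?_, ?_⟩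
      · simp only [hgradt]
        exact hgmeas.const_smul (1 + t)
      · have heq : (fun x => ‖gradient Φt x‖ ^ 2)
            = fun x => (1 + t) ^ 2 * ‖gradient Φstar x‖ ^ 2 := by
          funext x
          rw [hgradt x, norm_smul, mul_pow, Real.norm_eq_abs, sq_abs]
        rw [heq]
        exact hgint.const_mul _
    have hle := hmin Φt hmem
    simp only at hle
    have hpt : ∀ x, F x - Matrix.toEuclideanLin M⁻¹ (gradient Φt x)
        = R x - t • Gstar x := by
      intro x
      rw [hgradt x, _root_.map_smul, ← hG x, hR x]
      module
    have expand : ∀ x, ⟪R x - t • Gstar x,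
        Matrix.toEuclideanLin M (R x - t • Gstar x)⟫
        = ⟪R x, Matrix.toEuclideanLin M (R x)⟫
          - 2 * t * ⟪Gstar x, Matrix.toEuclideanLin M (R x)⟫
          + t ^ 2 * ⟪Gstar x, Matrix.toEuclideanLin M (Gstar x)⟫ := by
      intro x
      have comm : ⟪R x, Matrix.toEuclideanLin M (Gstar x)⟫
          = ⟪Gstar x, Matrix.toEuclideanLin M (R x)⟫ :=
        (real_inner_comm _ _).trans (hMsym (Gstar x) (R x))
      simp only [map_sub, _root_.map_smul, inner_sub_left, inner_sub_right,
        real_inner_smul_left, real_inner_smul_right, comm]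
      ring
    simp only [hRG, hpt, expand] at hle
    have iS1 : Integrable (fun x => ⟪R x, Matrix.toEuclideanLin M (R x)⟫
        - 2 * t * ⟪Gstar x, Matrix.toEuclideanLin M (R x)⟫) μ :=
      iRR.sub (iGR.const_mul (2 * t))
    rw [integral_add iS1 (iGG.const_mul (t ^ 2)),
      integral_sub iRR (iGR.const_mul (2 * t)), integral_const_mul _ _,
      integral_const_mul _ _, ← ha, ← hcdef] at hle
    linarith
  -- deduce that the cross term vanishes
  have htend : Filter.Tendsto (fun t : ℝ => t * a)
      (nhdsWithin 0 (Set.Ioi 0)) (nhds 0) := by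
    have h : Filter.Tendsto (fun t : ℝ => t * a) (nhds 0) (nhds 0) := by
      simpa using (continuous_mul_right a).tendsto 0
    exact h.mono_left nhdsWithin_le_nhds
  have h1 : 2 * c ≤ 0 := by
    refine ge_of_tendsto htend ?_
    filter_upwards [self_mem_nhdsWithin] with t ht
    have hk := key t
    have ht' : (0:ℝ) < t := ht
    nlinarith
  have h2 : -(2 * c) ≤ 0 := by
    refine ge_of_tendsto htend ?_
    filter_upwards [self_mem_nhdsWithin] with t ht
    have hk := key (-t)
    have ht' : (0:ℝ) < t := ht
    nlinarith
  have hc : c = 0 := by linarith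
  -- final expansion
  have expand2 : (fun x => ⟪F x, Matrix.toEuclideanLin M (F x)⟫)
      = fun x => ⟪Gstar x, Matrix.toEuclideanLin M (Gstar x)⟫
        + 2 * ⟪Gstar x, Matrix.toEuclideanLin M (R x)⟫
        + ⟪R x, Matrix.toEuclideanLin M (R x)⟫ := by
    funext x
    have hFeq : F x = Gstar x + R x := by rw [hR x]; abel
    have comm : ⟪R x, Matrix.toEuclideanLin M (Gstar x)⟫
        = ⟪Gstar x, Matrix.toEuclideanLin M (R x)⟫ :=
      (real_inner_comm _ _).trans (hMsym (Gstar x) (R x))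
    rw [hFeq]
    simp only [map_add, inner_add_left, inner_add_right, comm]
    ring
  have iS2 : Integrable (fun x => ⟪Gstar x, Matrix.toEuclideanLin M (Gstar x)⟫
      + 2 * ⟪Gstar x, Matrix.toEuclideanLin M (R x)⟫) μ :=
    iGG.add (iGR.const_mul 2)
  rw [expand2, integral_add iS2 iRR,
    integral_add iGG (iGR.const_mul 2), integral_const_mul _ _, ← ha, ← hcdef, hc]
  ring
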